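/- Let n/2 < k < n and θ = (n−k)/k. Let w : (0, r₀] → ℝ be C² with 0 ≤ r w'(r) ≤ 2, r w'(r) monotone increasing, and suppose c₀ := lim_{r→0⁺} r w'(r) < 2. Then for any c₁ ∈ (c₀, 2) there exist δ > 0 and C > 0 such that w'(r) ≤ C r^{−σ} for 0 < r < δ, where σ = 1 − (1−θ)(1 − c₁/2) < 1, provided w satisfies w'' + w'/r ≥ (1−θ)(w'/r)(1 − r w'/2) on (0, δ). In particular w is bounded near 0. -/

import Mathlib

open Set Filter

/-- For `n/2 < k < n`, `θ = (n-k)/k`: if `0 ≤ r w' ≤ 2`, `r w'` is increasing with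
limit `c₀ < 2` at `0⁺`, and `w'' + w'/r ≥ (1-θ)(w'/r)(1 - r w'/2)`, then for every
`c₁ ∈ (c₀, 2)` one has `w' ≤ C r^{-σ}` near `0`, with `σ = 1-(1-θ)(1-c₁/2) < 1`;
in particular `w` is bounded near `0`. -/
theorem stmt3 (n k : ℕ) (hk1 : (n : ℝ) / 2 < k) (hk2 : k < n)
    (θ : ℝ) (hθ : θ = ((n : ℝ) - k) / k)
    (r₀ c₀ : ℝ) (hr₀ : 0 < r₀) (w w' w'' : ℝ → ℝ)
    (hD1 : ∀ r ∈ Set.Ioc (0:ℝ) r₀, HasDerivAt w (w' r) r)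
    (hD2 : ∀ r ∈ Set.Ioc (0:ℝ) r₀, HasDerivAt w' (w'' r) r)
    (hbound : ∀ r ∈ Set.Ioc (0:ℝ) r₀, 0 ≤ r * w' r ∧ r * w' r ≤ 2)
    (hmono : MonotoneOn (fun r => r * w' r) (Set.Ioc (0:ℝ) r₀))
    (hlim : Tendsto (fun r => r * w' r) (nhdsWithin 0 (Set.Ioi 0)) (nhds c₀))
    (hc₀ : c₀ < 2)
    (hineq : ∀ r ∈ Set.Ioc (0:ℝ) r₀,
      (1 - θ) * (w' r / r) * (1 - r * w' r / 2) ≤ w'' r + w' r / r) :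
    ∀ c₁ ∈ Set.Ioo c₀ 2, ∃ δ > (0:ℝ), ∃ C > (0:ℝ),
      ((1 : ℝ) - (1 - θ) * (1 - c₁ / 2) < 1) ∧
      (∀ r : ℝ, 0 < r → r < δ →
        w' r ≤ C * r ^ (-(1 - (1 - θ) * (1 - c₁ / 2)))) ∧
      ∃ M : ℝ, ∀ r : ℝ, 0 < r → r < δ → |w r| ≤ M := by

  intro c₁ hc₁
  have hkn : (k:ℝ) < n := by exact_mod_cast hk2
  have hk0 : (0:ℝ) < k := by linarith
  have hθ0 : 0 < θ := by
    rw [hθ]; exact div_pos (by linarith) hk0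
  have hθ1 : θ < 1 := by
    rw [hθ, div_lt_one hk0]; linarith
  set σ : ℝ := 1 - (1 - θ) * (1 - c₁ / 2) with hσ
  have hc₀0 : 0 ≤ c₀ := by
    refine ge_of_tendsto hlim ?_
    filter_upwards [Ioo_mem_nhdsGT_of_mem ⟨le_refl (0:ℝ), hr₀⟩] with r hr
    exact (hbound r ⟨hr.1, hr.2.le⟩).1
  have hc₁0 : 0 < c₁ := lt_of_le_of_lt hc₀0 hc₁.1
  have hc₁2 : c₁ < 2 := hc₁.2
  have h1σ : 0 < 1 - σ := by rw [hσ]; nlinarith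
  -- choose δ
  have hev : ∀ᶠ r in nhdsWithin (0:ℝ) (Ioi 0), r * w' r < c₁ ∧ r ∈ Ioo (0:ℝ) r₀ := by
    filter_upwards [hlim.eventually_lt_const hc₁.1,
      Ioo_mem_nhdsGT_of_mem ⟨le_refl (0:ℝ), hr₀⟩] with r h1 h2
    exact ⟨h1, h2⟩
  obtain ⟨δ, hδc, hδ0, hδr₀⟩ := hev.exists
  have hsub : Ioc (0:ℝ) δ ⊆ Ioc 0 r₀ := Ioc_subset_Ioc le_rfl hδr₀.le
  have hδmem : δ ∈ Ioc (0:ℝ) r₀ := ⟨hδ0, hδr₀.le⟩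
  have hgle : ∀ r ∈ Ioc (0:ℝ) δ, r * w' r ≤ c₁ := fun r hr =>
    le_of_lt (lt_of_le_of_lt (hmono (hsub hr) hδmem hr.2) hδc)
  have hw'0 : ∀ r ∈ Ioc (0:ℝ) r₀, 0 ≤ w' r := by
    intro r hr
    have h := (hbound r hr).1
    nlinarith [hr.1]
  -- derivative of g(r) = r * w' r
  have hgderiv : ∀ r ∈ Ioc (0:ℝ) r₀,
      HasDerivAt (fun s => s * w' s) (w' r + r * w'' r) r := by
    intro r hr
    have := (hasDerivAt_id r).mul (hD2 r hr)
    exact this.congr_deriv (by simp)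
  -- growth inequality
  have hkey : ∀ r ∈ Ioc (0:ℝ) δ, (1 - σ) * (r * w' r) ≤ r * (w' r + r * w'' r) := by
    intro r hr
    have hr0 : 0 < r := hr.1
    have hne : r ≠ 0 := ne_of_gt hr0
    have hrr := hineq r (hsub hr)
    have hmul := mul_le_mul_of_nonneg_left hrr (sq_nonneg r)
    have e1 : r ^ 2 * ((1 - θ) * (w' r / r) * (1 - r * w' r / 2))
        = (1 - θ) * (r * w' r) * (1 - r * w' r / 2) := by
      field_simp
    have e2 : r ^ 2 * (w'' r + w' r / r) = r * (w' r + r * w'' r) := by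
      field_simp; ring
    rw [e1, e2] at hmul
    have hg0 := (hbound r (hsub hr)).1
    have hgc := hgle r hr
    rw [hσ]
    nlinarith [mul_nonneg (mul_nonneg (by linarith : (0:ℝ) ≤ 1 - θ) hg0)
      (by linarith : (0:ℝ) ≤ c₁ - r * w' r)]
  -- the function h(r) = (r w'(r)) r^(σ-1)
  have hhd : ∀ r ∈ Ioc (0:ℝ) δ, HasDerivAt (fun s => (s * w' s) * s ^ (σ - 1))
      ((w' r + r * w'' r) * r ^ (σ - 1) + (r * w' r) * ((σ - 1) * r ^ (σ - 1 - 1))) r :=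
    fun r hr => (hgderiv r (hsub hr)).mul
      (Real.hasDerivAt_rpow_const (Or.inl (ne_of_gt hr.1)))
  have hmonoh : MonotoneOn (fun s => (s * w' s) * s ^ (σ - 1)) (Ioc (0:ℝ) δ) := by
    apply monotoneOn_of_deriv_nonneg (convex_Ioc 0 δ)
    · intro r hr
      exact (hhd r hr).continuousAt.continuousWithinAt
    · intro r hr
      rw [interior_Ioc] at hr
      exact (hhd r ⟨hr.1, hr.2.le⟩).differentiableAt.differentiableWithinAt
    · intro r hr
      rw [interior_Ioc] at hr
      have hr0 : 0 < r := hr.1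
      rw [(hhd r ⟨hr.1, hr.2.le⟩).deriv]
      have hk2' := hkey r ⟨hr.1, hr.2.le⟩
      have e1 : r ^ (σ - 1) = r ^ (σ - 1 - 1) * r := by
        rw [← Real.rpow_add_one (ne_of_gt hr0)]
        congr 1; ring
      calc (0:ℝ) ≤ r ^ (σ - 1 - 1) * (r * (w' r + r * w'' r) + (σ - 1) * (r * w' r)) :=
            mul_nonneg (Real.rpow_nonneg hr0.le _) (by linarith)
        _ = (w' r + r * w'' r) * r ^ (σ - 1) + (r * w' r) * ((σ - 1) * r ^ (σ - 1 - 1)) := by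
            rw [e1]; ring
  set C : ℝ := δ * w' δ * δ ^ (σ - 1) + 1 with hC
  have hC0 : 0 < C := by
    have h1 : 0 ≤ δ * w' δ := (hbound δ hδmem).1
    have h2 : 0 ≤ δ ^ (σ - 1) := Real.rpow_nonneg hδ0.le _
    rw [hC]; nlinarith
  have hwbound : ∀ r : ℝ, 0 < r → r < δ → w' r ≤ C * r ^ (-σ) := by
    intro r hr0 hrδ
    have hrm : r ∈ Ioc (0:ℝ) δ := ⟨hr0, hrδ.le⟩
    have h1 : (r * w' r) * r ^ (σ - 1) ≤ δ * w' δ * δ ^ (σ - 1) :=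
      hmonoh hrm (right_mem_Ioc.mpr hδ0) hrδ.le
    have h2 : (r * w' r) * r ^ (σ - 1) ≤ C := by rw [hC]; linarith
    have e : w' r = ((r * w' r) * r ^ (σ - 1)) * r ^ (-σ) := by
      rw [mul_assoc, ← Real.rpow_add hr0]
      rw [show σ - 1 + -σ = -1 by ring, Real.rpow_neg_one]
      field_simp
    rw [e]
    exact mul_le_mul_of_nonneg_right h2 (Real.rpow_nonneg hr0.le _)
  -- w is monotone on (0, δ]
  have hmonow : MonotoneOn w (Ioc (0:ℝ) δ) := by
    apply monotoneOn_of_deriv_nonneg (convex_Ioc 0 δ)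
    · intro r hr
      exact (hD1 r (hsub hr)).continuousAt.continuousWithinAt
    · intro r hr
      rw [interior_Ioc] at hr
      exact (hD1 r (hsub ⟨hr.1, hr.2.le⟩)).differentiableAt.differentiableWithinAt
    · intro r hr
      rw [interior_Ioc] at hr
      rw [(hD1 r (hsub ⟨hr.1, hr.2.le⟩)).deriv]
      exact hw'0 r (hsub ⟨hr.1, hr.2.le⟩)
  -- v(r) = w r - (C/(1-σ)) r^(1-σ) is antitone on (0, δ]
  have hvd : ∀ r ∈ Ioc (0:ℝ) δ,
      HasDerivAt (fun s => w s - (C / (1 - σ)) * s ^ (1 - σ)) (w' r - C * r ^ (-σ)) r := by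
    intro r hr
    have h2 : HasDerivAt (fun s : ℝ => (C / (1 - σ)) * s ^ (1 - σ)) (C * r ^ (-σ)) r := by
      have := (Real.hasDerivAt_rpow_const (p := 1 - σ) (Or.inl (ne_of_gt hr.1))).const_mul
        (C / (1 - σ))
      refine this.congr_deriv ?_
      rw [show (1:ℝ) - σ - 1 = -σ by ring]
      field_simp
    exact (hD1 r (hsub hr)).sub h2
  have hanti : AntitoneOn (fun s => w s - (C / (1 - σ)) * s ^ (1 - σ)) (Ioc (0:ℝ) δ) := by
    apply antitoneOn_of_deriv_nonpos (convex_Ioc 0 δ)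
    · intro r hr
      exact (hvd r hr).continuousAt.continuousWithinAt
    · intro r hr
      rw [interior_Ioc] at hr
      exact (hvd r ⟨hr.1, hr.2.le⟩).differentiableAt.differentiableWithinAt
    · intro r hr
      rw [interior_Ioc] at hr
      rw [(hvd r ⟨hr.1, hr.2.le⟩).deriv]
      have := hwbound r hr.1 hr.2
      linarith
  refine ⟨δ, hδ0, C, hC0, by linarith, hwbound, ?_⟩
  refine ⟨|w δ| + (C / (1 - σ)) * δ ^ (1 - σ), ?_⟩
  intro r hr0 hrδ
  have hrm : r ∈ Ioc (0:ℝ) δ := ⟨hr0, hrδ.le⟩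
  have hδm : δ ∈ Ioc (0:ℝ) δ := right_mem_Ioc.mpr hδ0
  have hub : w r ≤ w δ := hmonow hrm hδm hrδ.le
  have hlb := hanti hrm hδm hrδ.le
  have hr_nonneg : 0 ≤ (C / (1 - σ)) * r ^ (1 - σ) :=
    mul_nonneg (div_nonneg hC0.le h1σ.le) (Real.rpow_nonneg hr0.le _)
  have hδ_nonneg : 0 ≤ (C / (1 - σ)) * δ ^ (1 - σ) :=
    mul_nonneg (div_nonneg hC0.le h1σ.le) (Real.rpow_nonneg hδ0.le _)
  have h1 := le_abs_self (w δ)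
  have h2 := neg_abs_le (w δ)
  rw [abs_le]
  constructor <;> [skip; linarith]
  simp only at hlb
  linarith
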